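/- Let T be a directed tree on vertex set {0, 1, …, n−1} (n ≥ 2) such that from every vertex j ≥ 1 there is a directed path in T to vertex 0, with each edge i → j labeled by an indeterminate a_{ji}. Let T̃ be obtained from T by adding, for each edge i → j, a self-loop at vertex i labeled −a_{ji}. Define the (n−1) × (n−1) matrix 𝔅 whose (i,j) entry is the sum over all walks W of length i in T̃ from vertex j to vertex 0 of the product of edge labels along W. Then det 𝔅 is a nonzero polynomial in ℚ[a_{ji}]. -/

import Mathlib

open BigOperators Matrix

/-- `walkSum L k s t` is the sum, over all walks of length `k` from `s` to `t` in the
directed graph edge-labeled by `L` (where `L s t` is the label of the edge `s → t`,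
label `0` meaning no edge), of the products of the edge labels along the walk. -/
def walkSum {V : Type*} [Fintype V] [DecidableEq V] {R : Type*} [CommRing R]
    (L : V → V → R) : ℕ → V → V → R
  | 0 => fun s t => if s = t then 1 else 0
  | (k + 1) => fun s t => ∑ w, L s w * walkSum L k w t

/-- The edge labels of the graph `T̃` obtained from the directed 0-tree with parent
function `parent` (edges `i → parent i` for `i ≠ 0`, labeled by the indeterminate
`a_{parent i, i} = X (parent i, i)`) by adding at each vertex `i ≠ 0` a self-loop
labeled `−a_{parent i, i}`. -/
noncomputable def treeLabels {n : ℕ} (root : Fin n) (parent : Fin n → Fin n) :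
    Fin n → Fin n → MvPolynomial (Fin n × Fin n) ℚ := fun s t =>
  if s = root then 0
  else if t = s then -MvPolynomial.X (parent s, s)
  else if t = parent s then MvPolynomial.X (parent s, s)
  else 0

/-! ### Auxiliary material -/

/-- `walkSum` of a matrix computes matrix powers. -/
lemma walkSum_eq_pow {V : Type*} [Fintype V] [DecidableEq V] {R : Type*} [CommRing R]
    (L : Matrix V V R) (k : ℕ) (s t : V) :
    walkSum (fun a b => L a b) k s t = (L ^ k) s t := by
  induction k generalizing s t with
  | zero => simp [walkSum, Matrix.one_apply]
  | succ k ih => simp [walkSum, pow_succ', Matrix.mul_apply, ih]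

/-- Ring homomorphisms commute with `walkSum`. -/
lemma map_walkSum {V : Type*} [Fintype V] [DecidableEq V] {R S : Type*} [CommRing R]
    [CommRing S] (f : R →+* S) (L : V → V → R) (k : ℕ) (s t : V) :
    f (walkSum L k s t) = walkSum (fun a b => f (L a b)) k s t := by
  induction k generalizing s t with
  | zero => simp [walkSum, apply_ite f]
  | succ k ih => simp [walkSum, ih]

/-- The rational matrix obtained from `treeLabels` by evaluating the variable
`X (i, j)` at `j + 1`. -/
def Lmat {n : ℕ} (r : Fin n) (parent : Fin n → Fin n) : Matrix (Fin n) (Fin n) ℚ :=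
  Matrix.of fun s t =>
    if s = r then 0
    else if t = s then -((s.val : ℚ) + 1)
    else if t = parent s then (s.val : ℚ) + 1
    else 0

/-- The key eigenvector construction: for every non-root vertex `w`, the matrix
`Lmat r parent` has a left eigenvector `y` with eigenvalue `-(w+1)` such that
`y r ≠ 0`. -/
lemma exists_left_eigenvector {n : ℕ} (r : Fin n) (parent : Fin n → Fin n)
    (hroot : ∀ i : Fin n, ∃ k : ℕ, parent^[k] i = r) (w : Fin n) (hw : w ≠ r) :
    ∃ y : Fin n → ℚ, y r ≠ 0 ∧ y ᵥ* (Lmat r parent) = (-((w.val : ℚ) + 1)) • y := by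
  classical
  set c : Fin n → ℚ := fun s => (s.val : ℚ) + 1 with hc
  have hcpos : ∀ s : Fin n, 0 < c s := by
    intro s; rw [hc]; positivity
  have hcinj : Function.Injective c := by
    intro s t hst
    have : (s.val : ℚ) = t.val := by
      have := hst; rw [hc] at this; simpa using this
    exact Fin.ext (by exact_mod_cast this)
  have hpne : ∀ s : Fin n, s ≠ r → parent s ≠ s := by
    intro s hs hps
    obtain ⟨k, hk⟩ := hroot s
    rw [Function.iterate_fixed hps] at hk; exact hs hk
  set d : ℕ := Nat.find (hroot w) with hd
  set v : ℕ → Fin n := fun k => parent^[k] w with hv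
  have hvd : v d = r := Nat.find_spec (hroot w)
  have hvlt : ∀ k < d, v k ≠ r := fun k hk => Nat.find_min (hroot w) hk
  have hv0 : v 0 = w := rfl
  -- distinctness along the chain
  have hchain : ∀ i j, i < j → j ≤ d → v i ≠ v j := by
    intro i j hij hjd heq
    have h1 : v ((d - j) + i) = r := by
      rw [hv]
      show parent^[(d - j) + i] w = r
      rw [Function.iterate_add_apply]
      have : parent^[i] w = parent^[j] w := heq
      rw [this, ← Function.iterate_add_apply]
      have : d - j + j = d := by omega
      rw [this]; exact hvd
    exact hvlt _ (by omega) h1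
  -- hitting times along the chain
  have hhv : ∀ k, k ≤ d → Nat.find (hroot (v k)) = d - k := by
    intro k hk
    have hle : Nat.find (hroot (v k)) ≤ d - k := by
      apply Nat.find_le
      show parent^[d - k] (v k) = r
      rw [hv]
      show parent^[d - k] (parent^[k] w) = r
      rw [← Function.iterate_add_apply]
      have : d - k + k = d := by omega
      rw [this]; exact hvd
    have hge : d ≤ Nat.find (hroot (v k)) + k := by
      rw [hd]
      apply Nat.find_le
      rw [Function.iterate_add_apply]
      exact Nat.find_spec (hroot (v k))
    omega
  -- the coefficients along the chain
  set g : ℕ → ℚ := fun k =>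
    Nat.rec 1 (fun k gk => gk * c (v k) / ((if v (k + 1) = r then 0 else c (v (k + 1))) - c w)) k
    with hg
  have hg0 : g 0 = 1 := rfl
  have hgs : ∀ k, g (k + 1) = g k * c (v k) / ((if v (k + 1) = r then 0 else c (v (k + 1))) - c w) :=
    fun k => rfl
  have hden : ∀ k, k + 1 ≤ d → ((if v (k + 1) = r then 0 else c (v (k + 1))) - c w) ≠ 0 := by
    intro k hk
    by_cases hr1 : v (k + 1) = r
    · rw [if_pos hr1]
      have := hcpos w; intro hcon; rw [zero_sub, neg_eq_zero] at hcon; linarith [hcon ▸ this]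
    · rw [if_neg hr1]
      refine sub_ne_zero_of_ne fun hcon => ?_
      have : v (k + 1) = w := hcinj hcon
      exact hchain 0 (k + 1) (by omega) hk (hv0.trans this.symm)
  have hgne : ∀ k, k ≤ d → g k ≠ 0 := by
    intro k
    induction k with
    | zero => intro _; rw [hg0]; norm_num
    | succ k ih =>
      intro hk
      rw [hgs]
      exact div_ne_zero (mul_ne_zero (ih (by omega)) (ne_of_gt (hcpos _))) (hden k hk)
  have hgrec : ∀ k, k + 1 ≤ d →
      g (k + 1) * ((if v (k + 1) = r then 0 else c (v (k + 1))) - c w) = g k * c (v k) := by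
    intro k hk
    rw [hgs]
    exact div_mul_cancel₀ _ (hden k hk)
  -- the eigenvector
  set y : Fin n → ℚ := fun t =>
    if v (d - Nat.find (hroot t)) = t then g (d - Nat.find (hroot t)) else 0 with hy
  have hyr : y r = g d := by
    have hr0 : Nat.find (hroot r) = 0 := by
      have : parent^[0] r = r := rfl
      exact Nat.eq_zero_of_le_zero (Nat.find_le this)
    simp only [hy, hr0, Nat.sub_zero, hvd, if_pos rfl]
    simp
  -- y as a sum of indicators
  have hysum : ∀ t : Fin n,
      (∑ k ∈ Finset.range (d + 1), if t = v k then g k else 0) = y t := by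
    intro t
    by_cases hex : ∃ k, k ≤ d ∧ v k = t
    · obtain ⟨k, hkd, hkt⟩ := hex
      have hfind : Nat.find (hroot t) = d - k := by rw [← hkt]; exact hhv k hkd
      have hdk : d - Nat.find (hroot t) = k := by omega
      have hyt : y t = g k := by simp only [hy, hdk, hkt]; simp
      rw [hyt, Finset.sum_eq_single k]
      · rw [if_pos hkt.symm]
      · intro b hb hbk
        have hbd : b ≤ d := Finset.mem_range_succ_iff.mp hb
        have : t ≠ v b := by
          intro hbt
          rcases lt_or_gt_of_ne hbk with h' | h'
          · exact hchain b k h' hkd (hbt.symm.trans hkt.symm)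
          · exact hchain k b h' hbd (hkt.trans hbt)
        rw [if_neg this]
      · intro hk; exact absurd (Finset.mem_range_succ_iff.mpr hkd) hk
    · push_neg at hex
      have hyt : y t = 0 := by
        simp only [hy]
        by_cases hcond : v (d - Nat.find (hroot t)) = t
        · exact absurd hcond (hex _ (by omega))
        · rw [if_neg hcond]
      rw [hyt]
      apply Finset.sum_eq_zero
      intro k hk
      have := hex k (Finset.mem_range_succ_iff.mp hk)
      rw [if_neg (fun h => this h.symm)]
  refine ⟨y, by rw [hyr]; exact hgne d le_rfl, ?_⟩
  funext t
  -- compute the t-entry of y ᵥ* L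
  have step1 : (y ᵥ* Lmat r parent) t
      = ∑ k ∈ Finset.range (d + 1), g k * (Lmat r parent) (v k) t := by
    have : (y ᵥ* Lmat r parent) t = ∑ s, y s * (Lmat r parent) s t := by
      simp [Matrix.vecMul, dotProduct]
    rw [this]
    have : ∀ s : Fin n, y s * (Lmat r parent) s t
        = ∑ k ∈ Finset.range (d + 1), (if s = v k then g k * (Lmat r parent) s t else 0) := by
      intro s
      rw [← hysum s, Finset.sum_mul]
      congr 1
      funext k
      rw [ite_mul, zero_mul]
    rw [Finset.sum_congr rfl (fun s _ => this s), Finset.sum_comm]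
    congr 1
    funext k
    rw [Finset.sum_ite_eq' Finset.univ (v k) (fun s => g k * (Lmat r parent) s t)]
    rw [if_pos (Finset.mem_univ _)]
  have hLr : (Lmat r parent) (v d) t = 0 := by
    rw [hvd]; simp [Lmat]
  rw [step1, Finset.sum_range_succ, hLr, mul_zero, add_zero]
  -- telescoping
  set P : ℕ → ℚ := fun k =>
    g k * (if v k = r then 0 else c (v k)) * (if t = v k then 1 else 0) with hP
  have hterm : ∀ k ∈ Finset.range d, g k * (Lmat r parent) (v k) t
      = (P (k + 1) - P k) - c w * (if t = v (k + 1) then g (k + 1) else 0) := by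
    intro k hk
    rw [Finset.mem_range] at hk
    have hvkr : v k ≠ r := hvlt k hk
    have hpar : parent (v k) = v (k + 1) := (Function.iterate_succ_apply' parent k w).symm
    have hne : v (k + 1) ≠ v k := by rw [← hpar]; exact hpne (v k) hvkr
    have hLval : (Lmat r parent) (v k) t
        = if t = v k then -(c (v k)) else if t = v (k + 1) then c (v k) else 0 := by
      rw [Lmat]
      simp only [Matrix.of_apply, if_neg hvkr, hpar, hc]
    by_cases h1 : t = v k
    · have h2 : ¬(t = v (k + 1)) := fun h => hne (h.symm.trans h1)
      rw [hLval]
      simp only [hP, if_pos h1, if_neg h2, if_neg hvkr, mul_zero, mul_one, zero_sub]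
      ring
    · by_cases h2 : t = v (k + 1)
      · rw [hLval]
        simp only [hP, if_neg h1, if_pos h2, mul_zero, mul_one, zero_sub]
        linear_combination (-1 : ℚ) * hgrec k hk
      · rw [hLval]
        simp only [hP, if_neg h1, if_neg h2, mul_zero]
        ring
  rw [Finset.sum_congr rfl hterm]
  rw [Finset.sum_sub_distrib, Finset.sum_range_sub (fun k => P k)]
  have hsum2 : ∑ k ∈ Finset.range d, c w * (if t = v (k + 1) then g (k + 1) else 0)
      = c w * (y t - (if t = v 0 then g 0 else 0)) := by
    rw [← Finset.mul_sum]
    congr 1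
    have := Finset.sum_range_succ' (fun k => if t = v k then g k else 0) d
    rw [hysum t] at this
    linarith [this]
  rw [hsum2]
  have hPd : P d = 0 := by simp [hP, hvd]
  have hP0 : P 0 = c w * (if t = v 0 then g 0 else 0) := by
    simp only [hP, hv0, hg0, if_neg hw]
    by_cases h0 : t = w
    · rw [if_pos h0]; ring
    · rw [if_neg h0]; ring
  rw [hPd, hP0]
  show 0 - c w * (if t = v 0 then g 0 else 0) - c w * (y t - (if t = v 0 then g 0 else 0))
      = (-((w.val : ℚ) + 1)) • y t
  have : -((w.val : ℚ) + 1) = -(c w) := by rw [hc]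
  rw [this, smul_eq_mul]
  ring

theorem stmt7 {n : ℕ} (hn : 2 ≤ n) (parent : Fin n → Fin n)
    (hroot : ∀ i : Fin n, ∃ k : ℕ, parent^[k] i = ⟨0, by omega⟩)
    (𝔅 : Matrix (Fin (n - 1)) (Fin (n - 1)) (MvPolynomial (Fin n × Fin n) ℚ))
    (h𝔅 : ∀ i j : Fin (n - 1),
      𝔅 i j = walkSum (treeLabels (⟨0, by omega⟩ : Fin n) parent) (i.val + 1) ⟨j.val + 1, by omega⟩ ⟨0, by omega⟩) :
    𝔅.det ≠ 0 := by
  classical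
  intro hdet
  set r : Fin n := ⟨0, by omega⟩ with hr
  set L : Matrix (Fin n) (Fin n) ℚ := Lmat r parent with hL
  set φ : MvPolynomial (Fin n × Fin n) ℚ →+* ℚ :=
    (MvPolynomial.aeval (fun p : Fin n × Fin n => (p.2.val : ℚ) + 1)).toRingHom with hφ
  have hφX : ∀ st : Fin n × Fin n, φ (MvPolynomial.X st) = (st.2.val : ℚ) + 1 := by
    intro st; rw [hφ]; simp
  have hφL : ∀ s t : Fin n, φ (treeLabels r parent s t) = L s t := by
    intro s t
    rw [hL]
    show φ (treeLabels r parent s t) = Lmat r parent s t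
    rw [treeLabels, Lmat]
    simp only [Matrix.of_apply]
    by_cases h1 : s = r
    · rw [if_pos h1, if_pos h1, map_zero]
    · rw [if_neg h1, if_neg h1]
      by_cases h2 : t = s
      · rw [if_pos h2, if_pos h2, map_neg, hφX]
      · rw [if_neg h2, if_neg h2]
        by_cases h3 : t = parent s
        · rw [if_pos h3, if_pos h3, hφX]
        · rw [if_neg h3, if_neg h3, map_zero]
  have hBmap : ∀ i j : Fin (n - 1),
      φ (𝔅 i j) = (L ^ (i.val + 1)) ⟨j.val + 1, by omega⟩ r := by
    intro i j
    rw [h𝔅, map_walkSum]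
    have hfun : (fun a b => φ (treeLabels r parent a b)) = fun a b => L a b := by
      funext a b; exact hφL a b
    rw [hfun, walkSum_eq_pow]
  have hdet0 : (𝔅.map φ).det = 0 := by
    have h := RingHom.map_det φ 𝔅
    rw [hdet, map_zero] at h
    exact h.symm
  obtain ⟨u, hu0, huB⟩ := Matrix.exists_vecMul_eq_zero_iff.mpr hdet0
  set q : Polynomial ℚ := ∑ i : Fin (n - 1), Polynomial.C (u i) * Polynomial.X ^ (i.val + 1)
    with hq
  have hqdeg : q.natDegree ≤ n - 1 := by
    rw [hq]
    apply Polynomial.natDegree_sum_le_of_forall_le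
    intro i _
    refine le_trans (Polynomial.natDegree_C_mul_le _ _) ?_
    rw [Polynomial.natDegree_X_pow]
    have := i.isLt
    omega
  have hqne : q ≠ 0 := by
    obtain ⟨i0, hi0⟩ := Function.ne_iff.mp hu0
    intro h0
    apply hi0
    have hcoeff : q.coeff (i0.val + 1) = u i0 := by
      rw [hq, Polynomial.finset_sum_coeff]
      rw [Finset.sum_eq_single i0]
      · simp [Polynomial.coeff_C_mul, Polynomial.coeff_X_pow]
      · intro b _ hb
        have hbb : ¬(i0.val + 1 = b.val + 1) := by
          intro h
          exact hb (Fin.ext (by omega))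
        simp [Polynomial.coeff_C_mul, Polynomial.coeff_X_pow, hbb]
        intro h; omega
      · intro h; exact absurd (Finset.mem_univ i0) h
    rw [h0] at hcoeff
    simpa using hcoeff.symm
  have hex : ∃ w : Fin n, w ≠ r ∧ q.eval (-((w.val : ℚ) + 1)) ≠ 0 := by
    by_contra hcon
    push_neg at hcon
    have heval : ∀ s : Fin n, q.eval (if s = r then 0 else -((s.val : ℚ) + 1)) = 0 := by
      intro s
      by_cases hs : s = r
      · rw [if_pos hs, hq]
        rw [Polynomial.eval_finset_sum]
        apply Finset.sum_eq_zero
        intro i _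
        simp
      · rw [if_neg hs]
        exact hcon s hs
    have hinj : Function.Injective (fun s : Fin n => if s = r then (0 : ℚ) else -((s.val : ℚ) + 1)) := by
      intro s t hst
      simp only at hst
      split_ifs at hst with h1 h2 h2
      · rw [h1, h2]
      · exfalso
        have h3 : (0 : ℚ) < (t.val : ℚ) + 1 := by positivity
        rw [eq_comm, neg_eq_iff_eq_neg] at hst
        simp at hst
        linarith
      · exfalso
        have h3 : (0 : ℚ) < (s.val : ℚ) + 1 := by positivity
        rw [neg_eq_iff_eq_neg] at hst
        simp at hst
        linarith
      · have : (s.val : ℚ) = t.val := by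
          have := neg_injective hst
          linarith [this]
        exact Fin.ext (by exact_mod_cast this)
    have := Polynomial.eq_zero_of_natDegree_lt_card_of_eval_eq_zero q hinj heval
      (by rw [Fintype.card_fin]; omega)
    exact hqne this
  obtain ⟨w, hwr, hqw⟩ := hex
  obtain ⟨y, hyr, hyL⟩ := exists_left_eigenvector r parent hroot w hwr
  set μ : ℚ := -((w.val : ℚ) + 1) with hμ
  -- powers act on y
  have hpow : ∀ k : ℕ, y ᵥ* (L ^ k) = (μ ^ k) • y := by
    intro k
    induction k with
    | zero => rw [pow_zero, pow_zero, Matrix.vecMul_one, one_smul]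
    | succ k ih =>
      rw [pow_succ, ← Matrix.vecMul_vecMul, ih, Matrix.smul_vecMul, hL, hyL, smul_smul,
        pow_succ]
  have hrow : ∀ i : Fin (n - 1),
      (∑ s : Fin n, y s * (L ^ (i.val + 1)) s r) = μ ^ (i.val + 1) * y r := by
    intro i
    have := congrFun (hpow (i.val + 1)) r
    simpa [Matrix.vecMul, dotProduct, Pi.smul_apply, smul_eq_mul] using this
  have hcol : ∀ s : Fin n, (∑ i : Fin (n - 1), u i * (L ^ (i.val + 1)) s r) = 0 := by
    intro s
    by_cases hs : s = r
    · apply Finset.sum_eq_zero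
      intro i _
      have hzero : (L ^ (i.val + 1)) s r = 0 := by
        rw [pow_succ', Matrix.mul_apply]
        apply Finset.sum_eq_zero
        intro x _
        have hLs : L s x = 0 := by
          rw [hL, hs]
          simp [Lmat]
        rw [hLs, zero_mul]
      rw [hzero, mul_zero]
    · have hs0 : s.val ≠ 0 := by
        intro h
        exact hs (Fin.ext (by rw [hr, h]))
      have hslt := s.isLt
      set j : Fin (n - 1) := ⟨s.val - 1, by omega⟩ with hj
      have hsj : (⟨j.val + 1, by omega⟩ : Fin n) = s := by
        have hjv : j.val = s.val - 1 := rfl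
        exact Fin.ext (by show j.val + 1 = s.val; rw [hjv]; omega)
      have hj0 := congrFun huB j
      simp only [Matrix.vecMul, dotProduct, Pi.zero_apply] at hj0
      calc (∑ i : Fin (n - 1), u i * (L ^ (i.val + 1)) s r)
          = ∑ i : Fin (n - 1), u i * (𝔅.map φ) i j := by
            apply Finset.sum_congr rfl
            intro i _
            congr 1
            rw [Matrix.map_apply, hBmap i j, hsj]
        _ = 0 := hj0
  have hqeval : q.eval μ = ∑ i : Fin (n - 1), u i * μ ^ (i.val + 1) := by
    rw [hq, Polynomial.eval_finset_sum]
    apply Finset.sum_congr rfl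
    intro i _
    simp
  have hS : (0 : ℚ) = q.eval μ * y r := by
    calc (0 : ℚ) = ∑ s : Fin n, y s * (∑ i : Fin (n - 1), u i * (L ^ (i.val + 1)) s r) := by
          rw [Finset.sum_congr rfl (fun s _ => by rw [hcol s, mul_zero])]
          rw [Finset.sum_const_zero]
      _ = ∑ s : Fin n, ∑ i : Fin (n - 1), y s * (u i * (L ^ (i.val + 1)) s r) := by
          apply Finset.sum_congr rfl
          intro s _
          rw [Finset.mul_sum]
      _ = ∑ i : Fin (n - 1), ∑ s : Fin n, y s * (u i * (L ^ (i.val + 1)) s r) :=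
          Finset.sum_comm
      _ = ∑ i : Fin (n - 1), u i * ∑ s : Fin n, y s * (L ^ (i.val + 1)) s r := by
          apply Finset.sum_congr rfl
          intro i _
          rw [Finset.mul_sum]
          apply Finset.sum_congr rfl
          intro s _
          ring
      _ = ∑ i : Fin (n - 1), u i * (μ ^ (i.val + 1) * y r) := by
          apply Finset.sum_congr rfl
          intro i _
          rw [hrow i]
      _ = (∑ i : Fin (n - 1), u i * μ ^ (i.val + 1)) * y r := by
          rw [Finset.sum_mul]
          apply Finset.sum_congr rfl
          intro i _
          ring
      _ = q.eval μ * y r := by rw [hqeval]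
  exact mul_ne_zero hqw hyr hS.symm
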